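/- Let P be the group of primitive elements of a positive self-adjoint Hopf algebra H (i.e., elements x with μ*(x) = x⊗1 + 1⊗x), let I = ⊕_{n>0} H_n be the augmentation ideal, and let I² = μ(I ⊗ I). Then an element x ∈ I is primitive if and only if x is orthogonal to I² with respect to the inner product of H, i.e., P ∩ I = I ∩ (I²)^⊥. -/

import Mathlib

open TensorProduct Finsupp

variable (Ω : Type*)

/-- The standard inner product on `H = Ω →₀ ℤ` making the basis `(single ω 1)`
orthonormal: `⟨x, y⟩ = ∑ ω, x ω * y ω`.  This is the T-group structure of a PSH-algebra
with set of irreducible elements `Ω`. -/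
noncomputable def innerF : (Ω →₀ ℤ) →ₗ[ℤ] (Ω →₀ ℤ) →ₗ[ℤ] ℤ :=
  Finsupp.lsum ℤ fun ω => LinearMap.smulRight (LinearMap.id : ℤ →ₗ[ℤ] ℤ) (Finsupp.lapply ω)

/-- The induced pairing of `x ⊗ y` against elements of the tensor square:
`⟨x ⊗ y, ∑ a ⊗ b⟩ = ∑ ⟨x, a⟩ ⟨y, b⟩`. -/
noncomputable def innerT (x y : Ω →₀ ℤ) : (Ω →₀ ℤ) ⊗[ℤ] (Ω →₀ ℤ) →ₗ[ℤ] ℤ :=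
  TensorProduct.lift ((LinearMap.mul ℤ ℤ).compl₁₂ (innerF Ω x) (innerF Ω y))

variable (deg : Ω → ℕ)

/-- The `n`-th graded piece `H_n`: elements supported on irreducibles of degree `n`. -/
noncomputable def gradedPiece (n : ℕ) : Submodule ℤ (Ω →₀ ℤ) :=
  Finsupp.supported ℤ ℤ {ω | deg ω = n}

/-- The "tensor product of submodules" `p ⊗ q` inside `H ⊗ H`, as the range of the map
`p ⊗ q → H ⊗ H`. -/
noncomputable def tensorSub (p q : Submodule ℤ (Ω →₀ ℤ)) :
    Submodule ℤ ((Ω →₀ ℤ) ⊗[ℤ] (Ω →₀ ℤ)) :=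
  LinearMap.range (TensorProduct.map p.subtype q.subtype)


section AuxLemmas
variable (Ω : Type*)

lemma innerF_single (ω : Ω) (c : ℤ) (y : Ω →₀ ℤ) :
    innerF Ω (Finsupp.single ω c) y = c * y ω := by
  simp [innerF, Finsupp.lsum_single]

lemma innerF_apply_single (a : Ω →₀ ℤ) (ω : Ω) (c : ℤ) :
    innerF Ω a (Finsupp.single ω c) = c * a ω := by
  induction a using Finsupp.induction_linear with
  | zero => simp
  | add f g hf hg => simp [map_add, hf, hg, LinearMap.add_apply, mul_add]
  | single ω' c' =>
      rw [innerF_single]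
      classical
      rcases eq_or_ne ω ω' with rfl | h
      · simp [Finsupp.single_apply, mul_comm]
      · simp [Finsupp.single_apply, h, Ne.symm h]

lemma innerF_comm (a b : Ω →₀ ℤ) : innerF Ω a b = innerF Ω b a := by
  induction b using Finsupp.induction_linear with
  | zero => simp
  | add f g hf hg => simp [map_add, hf, hg, LinearMap.add_apply]
  | single ω c => rw [innerF_single, innerF_apply_single]

lemma innerT_tmul (u v a b : Ω →₀ ℤ) :
    innerT Ω u v (a ⊗ₜ[ℤ] b) = innerF Ω u a * innerF Ω v b := by
  exact TensorProduct.lift.tmul a b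

lemma innerT_eq_coeff (ω ω' : Ω) (t : (Ω →₀ ℤ) ⊗[ℤ] (Ω →₀ ℤ)) :
    innerT Ω (Finsupp.single ω 1) (Finsupp.single ω' 1) t =
      (finsuppTensorFinsupp' ℤ Ω Ω t) (ω, ω') := by
  induction t with
  | zero => simp
  | tmul a b => simp [innerT_tmul, innerF_single, finsuppTensorFinsupp'_apply_apply]
  | add s t hs ht => simp [map_add, hs, ht]

lemma lid_eq_coeff (ω₀ ω' : Ω) (t : (Ω →₀ ℤ) ⊗[ℤ] (Ω →₀ ℤ)) :
    ((TensorProduct.lid ℤ (Ω →₀ ℤ))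
      ((TensorProduct.map (Finsupp.lapply ω₀) LinearMap.id) t)) ω' =
      (finsuppTensorFinsupp' ℤ Ω Ω t) (ω₀, ω') := by
  induction t with
  | zero => rw [map_zero, LinearEquiv.map_zero]; simp
  | tmul a b => simp [finsuppTensorFinsupp'_apply_apply, Finsupp.lapply_apply]
  | add s t hs ht => simp [map_add, hs, ht]

lemma rid_eq_coeff (ω₀ ω : Ω) (t : (Ω →₀ ℤ) ⊗[ℤ] (Ω →₀ ℤ)) :
    ((TensorProduct.rid ℤ (Ω →₀ ℤ))
      ((TensorProduct.map LinearMap.id (Finsupp.lapply ω₀)) t)) ω =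
      (finsuppTensorFinsupp' ℤ Ω Ω t) (ω, ω₀) := by
  induction t with
  | zero => rw [map_zero, LinearEquiv.map_zero]; simp
  | tmul a b => simp [finsuppTensorFinsupp'_apply_apply, Finsupp.lapply_apply, mul_comm]
  | add s t hs ht => simp [map_add, hs, ht]

end AuxLemmas

/-- Let `H = ⊕ₙ Hₙ` be a positive self-adjoint Hopf algebra over `ℤ`
with distinguished orthonormal basis of homogeneous irreducible elements indexed by `Ω`
(with degree function `deg`, unique degree-`0` irreducible `ω₀` giving the unit, counit
the coefficient of `ω₀`, and multiplication `mul` and comultiplication `comul` graded,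
positive and mutually adjoint).  Let `P` be the set of primitive elements
(`μ*(x) = x ⊗ 1 + 1 ⊗ x`), `I = ⊕_{n>0} Hₙ` the augmentation ideal, and `I² = μ(I ⊗ I)`.
Then an element `x ∈ I` is primitive if and only if `x` is orthogonal to `I²`:
`P ∩ I = I ∩ (I²)^⊥`. -/
theorem primitive_iff_orthogonal_to_I_squared
    (ω₀ : Ω) (hdeg0 : deg ω₀ = 0) (hconn : ∀ ω, deg ω = 0 → ω = ω₀)
    (mul : (Ω →₀ ℤ) →ₗ[ℤ] (Ω →₀ ℤ) →ₗ[ℤ] (Ω →₀ ℤ))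
    (comul : (Ω →₀ ℤ) →ₗ[ℤ] (Ω →₀ ℤ) ⊗[ℤ] (Ω →₀ ℤ))
    -- the unit axiom: `single ω₀ 1` is a two-sided unit for `mul`
    (hone_mul : ∀ x, mul (Finsupp.single ω₀ 1) x = x)
    (hmul_one : ∀ x, mul x (Finsupp.single ω₀ 1) = x)
    -- associativity and coassociativity
    (hassoc : ∀ x y z, mul (mul x y) z = mul x (mul y z))
    (hcoassoc : (TensorProduct.assoc ℤ _ _ _).toLinearMap ∘ₗ
        (LinearMap.rTensor _ comul) ∘ₗ comul = (LinearMap.lTensor _ comul) ∘ₗ comul)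
    -- the counit axiom, with counit the coefficient of `ω₀`
    (hcounit_l : ∀ x, (TensorProduct.lid ℤ (Ω →₀ ℤ))
        ((TensorProduct.map (Finsupp.lapply ω₀) LinearMap.id) (comul x)) = x)
    (hcounit_r : ∀ x, (TensorProduct.rid ℤ (Ω →₀ ℤ))
        ((TensorProduct.map LinearMap.id (Finsupp.lapply ω₀)) (comul x)) = x)
    -- self-adjointness: `⟨x · y, z⟩ = ⟨x ⊗ y, μ*(z)⟩`
    (hadj : ∀ x y z, innerF Ω (mul x y) z = innerT Ω x y (comul z))
    -- gradedness of multiplication and comultiplication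
    (hmul_graded : ∀ k l x y, x ∈ gradedPiece Ω deg k → y ∈ gradedPiece Ω deg l →
      mul x y ∈ gradedPiece Ω deg (k + l))
    (hcomul_graded : ∀ n x, x ∈ gradedPiece Ω deg n →
      comul x ∈ ⨆ (p : ℕ × ℕ) (_ : p.1 + p.2 = n),
        tensorSub Ω (gradedPiece Ω deg p.1) (gradedPiece Ω deg p.2))
    -- positivity of multiplication and comultiplication
    (hmul_pos : ∀ x y, (∀ ω, 0 ≤ x ω) → (∀ ω, 0 ≤ y ω) → ∀ ω, 0 ≤ mul x y ω)
    (hcomul_pos : ∀ z, (∀ ω, 0 ≤ z ω) → ∀ ω ω',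
      0 ≤ innerT Ω (Finsupp.single ω 1) (Finsupp.single ω' 1) (comul z))
    -- `x` an element of the augmentation ideal `I`
    (x : Ω →₀ ℤ) (hx : x ω₀ = 0) :
    -- `x` is primitive iff `x ⟂ I²`
    (comul x = x ⊗ₜ[ℤ] Finsupp.single ω₀ 1 + Finsupp.single ω₀ 1 ⊗ₜ[ℤ] x) ↔
      ∀ z ∈ Submodule.span ℤ {z : Ω →₀ ℤ |
          ∃ u, u ω₀ = 0 ∧ ∃ v, v ω₀ = 0 ∧ z = mul u v},
        innerF Ω x z = 0 := by
    classical
  constructor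
  · intro hprim z hz
    refine Submodule.span_induction ?_ ?_ ?_ ?_ hz
    · rintro z ⟨u, hu, v, hv, rfl⟩
      rw [innerF_comm, hadj, hprim, map_add, innerT_tmul, innerT_tmul,
        innerF_apply_single, innerF_apply_single]
      simp [hu, hv]
    · simp
    · intro a b _ _ ha hb
      simp [map_add, ha, hb]
    · intro c a _ ha
      simp [map_smul, ha]
  · intro h
    set r := comul x - (x ⊗ₜ[ℤ] Finsupp.single ω₀ 1 + Finsupp.single ω₀ 1 ⊗ₜ[ℤ] x) with hr_def
    have key : ∀ p : Ω × Ω, (finsuppTensorFinsupp' ℤ Ω Ω r) p = 0 := by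
      rintro ⟨ω, ω'⟩
      by_cases hω : ω = ω₀
      · have h1 : (finsuppTensorFinsupp' ℤ Ω Ω (comul x)) (ω₀, ω') = x ω' := by
          rw [← lid_eq_coeff, hcounit_l]
        rw [hω]
        simp [hr_def, map_sub, map_add, Finsupp.sub_apply, Finsupp.add_apply, h1,
          finsuppTensorFinsupp'_apply_apply, hx, Finsupp.single_eq_same]
      · by_cases hω' : ω' = ω₀
        · have h1 : (finsuppTensorFinsupp' ℤ Ω Ω (comul x)) (ω, ω₀) = x ω := by
            rw [← rid_eq_coeff, hcounit_r]
          rw [hω']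
          simp [hr_def, map_sub, map_add, Finsupp.sub_apply, Finsupp.add_apply, h1,
            finsuppTensorFinsupp'_apply_apply, hx, Finsupp.single_eq_same]
        · have h1 : innerT Ω (Finsupp.single ω 1) (Finsupp.single ω' 1) (comul x) = 0 := by
            rw [← hadj, innerF_comm]
            exact h _ (Submodule.subset_span
              ⟨_, Finsupp.single_eq_of_ne' hω, _, Finsupp.single_eq_of_ne' hω', rfl⟩)
          rw [← innerT_eq_coeff, hr_def, map_sub, map_add, h1, innerT_tmul, innerT_tmul]
          simp [innerF_single, Finsupp.single_eq_of_ne hω, Finsupp.single_eq_of_ne hω',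
            Finsupp.single_eq_of_ne (Ne.symm hω), Finsupp.single_eq_of_ne (Ne.symm hω')]
    have hr0 : r = 0 := by
      apply (finsuppTensorFinsupp' ℤ Ω Ω).map_eq_zero_iff.mp
      ext p
      exact key p
    exact sub_eq_zero.mp hr0
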